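/- arXiv:2003.06684 — 2 statements merged into one kernel-verified Lean document; each statement's English description precedes it below -/
import Mathlib

section
/- Let p ∈ [1,∞), let P₀ be a Borel probability measure on ℝ^d with finite p-th moment, and let P be a Borel probability measure on ℝ^d with infinite p-th moment, i.e., ∫ ‖x‖^p dP(x) = ∞. For an i.i.d. sample X₁,…,Xₙ from P with empirical distribution P̂_n, let T_n = W_p^p(P̂_n, P₀). Then T_n → ∞ in Pⁿ-probability: for every M > 0, lim_{n→∞} Pⁿ[T_n > M] = 1. -/
open MeasureTheory ENNReal Filter Topology

noncomputable section

/-- `ℝ^d` as Euclidean space. -/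
abbrev Euc (d : ℕ) : Type := EuclideanSpace ℝ (Fin d)

/-- The set of couplings of two Borel probability measures: probability measures on the
product space whose first marginal is `P` and second marginal is `Q`. -/
def couplings {E : Type*} [MeasurableSpace E] (P Q : Measure E) : Set (Measure (E × E)) :=
  {γ | IsProbabilityMeasure γ ∧ γ.map Prod.fst = P ∧ γ.map Prod.snd = Q}

/-- `W_p^p(P,Q)`: the `p`-th power of the `p`-Wasserstein distance,
`inf_{γ ∈ Γ(P,Q)} ∫ ‖x - y‖^p dγ(x,y)`, as an extended nonnegative real. -/
def WpPow {E : Type*} [MeasurableSpace E] [NormedAddCommGroup E] (p : ℝ) (P Q : Measure E) :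
    ℝ≥0∞ :=
  ⨅ γ ∈ couplings P Q, ∫⁻ z, ENNReal.ofReal (‖z.1 - z.2‖ ^ p) ∂γ

/-- The `p`-Wasserstein distance `W_p(P,Q)`. -/
def Wp {E : Type*} [MeasurableSpace E] [NormedAddCommGroup E] (p : ℝ) (P Q : Measure E) :
    ℝ≥0∞ :=
  WpPow p P Q ^ (1 / p)

/-- Empirical distribution `n⁻¹ ∑ᵢ δ_{x i}` of `n` points. -/
def empDist {E : Type*} [MeasurableSpace E] {n : ℕ} (x : Fin n → E) : Measure E :=
  (n : ℝ≥0∞)⁻¹ • ∑ i, Measure.dirac (x i)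

/-- The `n`-fold product measure `P^n` on `(ℝ^d)^n`. -/
def prodn {E : Type*} [MeasurableSpace E] (P : Measure E) (n : ℕ) : Measure (Fin n → E) :=
  Measure.pi fun _ => P

/-- `P` has a finite moment of order `p`. -/
def HasFinMom {E : Type*} [MeasurableSpace E] [NormedAddCommGroup E] (p : ℝ) (P : Measure E) :
    Prop :=
  ∫⁻ x, ENNReal.ofReal (‖x‖ ^ p) ∂P ≠ ∞

/-! ### Auxiliary lemmas -/

section Aux

open NNReal Function Set

variable {E : Type*} [MeasurableSpace E]

lemma pi_map_eval {n : ℕ} (P : Measure E) [IsProbabilityMeasure P] (i : Fin n) :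
    (Measure.pi fun _ : Fin n => P).map (fun x => x i) = P := by
  ext s hs
  rw [Measure.map_apply (measurable_pi_apply i) hs]
  have hpre : (fun x : Fin n → E => x i) ⁻¹' s
      = Set.pi Set.univ (Function.update (fun _ => Set.univ) i s) := by
    ext x
    simp only [Set.mem_preimage, Set.mem_univ_pi, Function.update_apply]
    constructor
    · intro h j; split <;> simp_all
    · intro h; simpa using h i
  rw [hpre, Measure.pi_pi]
  have : ∀ j, P (Function.update (fun _ => Set.univ) i s j)
      = Function.update (fun _ : Fin n => (1 : ℝ≥0∞)) i (P s) j := by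
    intro j
    rcases eq_or_ne j i with rfl | hj <;> simp [Function.update_apply, *]
  simp_rw [this]
  rw [Finset.prod_update_of_mem (Finset.mem_univ i)]
  simp

lemma pi_map_eval_pair {n : ℕ} (P : Measure E) [IsProbabilityMeasure P] {i j : Fin n}
    (hij : i ≠ j) :
    (Measure.pi fun _ : Fin n => P).map (fun x => (x i, x j)) = P.prod P := by
  refine (Measure.prod_eq (μ := P) (ν := P) fun s t hs ht => ?_).symm
  rw [Measure.map_apply (by exact (measurable_pi_apply i).prodMk (measurable_pi_apply j))
    (hs.prod ht)]
  have hpre : (fun x : Fin n → E => (x i, x j)) ⁻¹' (s ×ˢ t)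
      = Set.pi Set.univ (Function.update (Function.update (fun _ => Set.univ) i s) j t) := by
    ext x
    simp only [Set.mem_preimage, Set.mem_prod, Set.mem_univ_pi, Function.update_apply]
    constructor
    · rintro ⟨h1, h2⟩ k
      rcases eq_or_ne k j with rfl | hkj
      · simp [h2]
      · rcases eq_or_ne k i with rfl | hki
        · simp [hkj, h1]
        · simp [hkj, hki]
    · intro h
      constructor
      · have := h i; simpa [hij] using this
      · have := h j; simpa using this
  rw [hpre, Measure.pi_pi]
  have : ∀ k, P (Function.update (Function.update (fun _ => Set.univ) i s) j t k)
      = Function.update (Function.update (fun _ : Fin n => (1 : ℝ≥0∞)) i (P s)) j (P t) k := by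
    intro k
    rcases eq_or_ne k j with rfl | hkj
    · simp
    · rcases eq_or_ne k i with rfl | hki <;>
        simp [Function.update_apply, hkj, *]
  simp_rw [this]
  rw [Finset.prod_update_of_mem (Finset.mem_univ j)]
  rw [Finset.prod_update_of_mem (by simp [hij] : i ∈ Finset.univ \ {j})]
  simp [mul_comm]

lemma lintegral_eval_pi {n : ℕ} (P : Measure E) [IsProbabilityMeasure P] (i : Fin n)
    {f : E → ℝ≥0∞} (hf : Measurable f) :
    ∫⁻ x : Fin n → E, f (x i) ∂(Measure.pi fun _ => P) = ∫⁻ y, f y ∂P := by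
  rw [← lintegral_map hf (measurable_pi_apply i), pi_map_eval]

lemma lintegral_eval_pair_pi {n : ℕ} (P : Measure E) [IsProbabilityMeasure P] {i j : Fin n}
    (hij : i ≠ j) {f g : E → ℝ≥0∞} (hf : Measurable f) (hg : Measurable g) :
    ∫⁻ x : Fin n → E, f (x i) * g (x j) ∂(Measure.pi fun _ => P)
      = (∫⁻ y, f y ∂P) * ∫⁻ y, g y ∂P := by
  have := pi_map_eval_pair P hij
  calc ∫⁻ x : Fin n → E, f (x i) * g (x j) ∂(Measure.pi fun _ => P)
      = ∫⁻ z : E × E, f z.1 * g z.2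
          ∂((Measure.pi fun _ : Fin n => P).map (fun x => (x i, x j))) := by
        rw [lintegral_map (by fun_prop : Measurable fun z : E × E => f z.1 * g z.2)
          ((measurable_pi_apply i).prodMk (measurable_pi_apply j))]
    _ = (∫⁻ y, f y ∂P) * ∫⁻ y, g y ∂P := by
        rw [this, lintegral_prod_mul hf.aemeasurable hg.aemeasurable]

lemma sq_tsub_add (a b : ℝ≥0∞) (ha : a ≠ ⊤) (hb : b ≠ ⊤) :
    (a - b) ^ 2 + 2 * a * b ≤ a ^ 2 + b ^ 2 := by
  lift a to ℝ≥0 using ha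
  lift b to ℝ≥0 using hb
  rw [← ENNReal.coe_sub]
  norm_cast
  rcases le_total a b with h | h
  · rw [tsub_eq_zero_of_le h]
    rw [← NNReal.coe_le_coe]
    push_cast
    nlinarith [sq_nonneg ((a : ℝ) - b), NNReal.coe_nonneg a, NNReal.coe_nonneg b]
  · rw [← NNReal.coe_le_coe]
    push_cast [NNReal.coe_sub h]
    nlinarith [sq_nonneg ((a : ℝ) - b)]

/-- A weak law of large numbers for bounded nonnegative random variables, in the form of a
Chebyshev-type bound for the probability that the empirical sum is small. -/
lemma weak_lln (P : Measure E) [IsProbabilityMeasure P] {g : E → ℝ≥0∞} (hg : Measurable g)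
    {c b : ℝ≥0∞} (hct : c ≠ ⊤) (hgc : ∀ x, g x ≤ c)
    (hb : b + 1 ≤ ∫⁻ x, g x ∂P) (n : ℕ) :
    (Measure.pi fun _ : Fin n => P) {x | ∑ i, g (x i) ≤ n * b}
      ≤ c ^ 2 * (n : ℝ≥0∞)⁻¹ := by
  set μb := ∫⁻ x, g x ∂P with hμb
  have hμbc : μb ≤ c := by
    calc μb ≤ ∫⁻ _, c ∂P := lintegral_mono hgc
    _ = c := by simp
  have hμbt : μb ≠ ⊤ := (lt_of_le_of_lt hμbc hct.lt_top).ne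
  have hbt : b ≠ ⊤ := fun hbt => by
    simp [hbt] at hb; exact hμbt (top_le_iff.mp (by simpa [hbt] using hb))
  have hc0 : c ≠ 0 := by
    intro h0
    have : (1 : ℝ≥0∞) ≤ 0 := le_trans (le_trans le_add_self hb) (h0 ▸ hμbc)
    simp at this
  rcases eq_or_ne n 0 with rfl | hn
  · simp only [Nat.cast_zero, zero_mul, ENNReal.inv_zero]
    have : c ^ 2 * (⊤ : ℝ≥0∞) = ⊤ := ENNReal.mul_top (by simpa using hc0)
    rw [this]
    exact le_top
  -- main case
  have htn : (n : ℝ≥0∞) ≠ ⊤ := natCast_ne_top n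
  have htn0 : (n : ℝ≥0∞) ≠ 0 := Nat.cast_ne_zero.mpr hn
  set h : E → ℝ≥0∞ := fun y => c - g y with hh_def
  have hh : Measurable h := measurable_const.sub hg
  have hhc : ∀ y, h y ≤ c := fun y => tsub_le_self
  set ν := ∫⁻ y, h y ∂P with hν
  have hνc : ν ≤ c := by
    calc ν ≤ ∫⁻ _, c ∂P := lintegral_mono hhc
    _ = c := by simp
  have hνt : ν ≠ ⊤ := (lt_of_le_of_lt hνc hct.lt_top).ne
  have hνeq : ν = c - μb := by
    rw [hν, hh_def, hμb]
    rw [lintegral_sub hg (by rw [← hμb]; exact hμbt) (Filter.Eventually.of_forall hgc)]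
    simp
  set S : (Fin n → E) → ℝ≥0∞ := fun x => ∑ i, h (x i) with hS_def
  have hS : Measurable S := Finset.measurable_sum _ fun i _ => hh.comp (measurable_pi_apply i)
  have hStop : ∀ x, S x ≤ n * c := by
    intro x
    calc S x ≤ ∑ _i : Fin n, c := Finset.sum_le_sum fun i _ => hhc _
    _ = n * c := by simp [mul_comm]
  have hES : ∫⁻ x, S x ∂(Measure.pi fun _ : Fin n => P) = n * ν := by
    rw [hS_def]
    rw [lintegral_finset_sum (f := fun (i : Fin n) (x : Fin n → E) => h (x i)) _
      (fun i _ => (hh.comp (measurable_pi_apply i) : Measurable fun x : Fin n → E => h (x i)))]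
    rw [Finset.sum_congr rfl fun i _ => lintegral_eval_pi P i hh]
    simp [mul_comm]
    rfl
  set q := ∫⁻ y, h y * h y ∂P with hq_def
  have hq : q ≤ c ^ 2 := by
    calc q ≤ ∫⁻ _, c * c ∂P := lintegral_mono fun y => mul_le_mul' (hhc y) (hhc y)
    _ = c ^ 2 := by simp [pow_two]
  have hES2 : ∫⁻ x, (S x) ^ 2 ∂(Measure.pi fun _ : Fin n => P)
      ≤ n * q + (n : ℝ≥0∞) ^ 2 * ν ^ 2 := by
    have hsq : ∀ x, (S x) ^ 2 = ∑ i : Fin n, ∑ j : Fin n, h (x i) * h (x j) := by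
      intro x
      rw [pow_two, hS_def, Finset.sum_mul_sum]
    simp_rw [hsq]
    rw [lintegral_finset_sum
      (f := fun (i : Fin n) (x : Fin n → E) => ∑ j : Fin n, h (x i) * h (x j)) _
      (fun i _ => (Finset.measurable_sum _ fun j _ =>
        ((hh.comp (measurable_pi_apply i)).mul (hh.comp (measurable_pi_apply j)) :
          Measurable fun x : Fin n → E => h (x i) * h (x j)) :
        Measurable fun x : Fin n → E => ∑ j : Fin n, h (x i) * h (x j)))]
    have hterm : ∀ i : Fin n,
        ∫⁻ x, ∑ j : Fin n, h (x i) * h (x j) ∂(Measure.pi fun _ : Fin n => P)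
          ≤ q + n * ν ^ 2 := by
      intro i
      rw [lintegral_finset_sum
        (f := fun (j : Fin n) (x : Fin n → E) => h (x i) * h (x j)) _
        (fun j _ => ((hh.comp (measurable_pi_apply i)).mul (hh.comp (measurable_pi_apply j)) :
          Measurable fun x : Fin n → E => h (x i) * h (x j)))]
      have hij_bound : ∀ j : Fin n,
          ∫⁻ x, h (x i) * h (x j) ∂(Measure.pi fun _ : Fin n => P)
            ≤ (if i = j then q else 0) + ν ^ 2 := by
        intro j
        rcases eq_or_ne i j with rfl | hij
        · rw [lintegral_eval_pi P i (f := fun y => h y * h y) (hh.mul hh)]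
          simp only [if_pos rfl]
          exact le_self_add
        · rw [lintegral_eval_pair_pi P hij hh hh]
          simp [hij, pow_two]
          exact le_rfl
      calc ∑ j : Fin n, ∫⁻ x, h (x i) * h (x j) ∂(Measure.pi fun _ : Fin n => P)
          ≤ ∑ j : Fin n, ((if i = j then q else 0) + ν ^ 2) :=
            Finset.sum_le_sum fun j _ => hij_bound j
        _ = q + n * ν ^ 2 := by
            rw [Finset.sum_add_distrib]
            simp [Finset.sum_ite_eq, mul_comm]
    calc ∑ i : Fin n, ∫⁻ x, ∑ j : Fin n, h (x i) * h (x j) ∂(Measure.pi fun _ : Fin n => P)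
        ≤ ∑ _i : Fin n, (q + n * ν ^ 2) := Finset.sum_le_sum fun i _ => hterm i
      _ = n * q + (n : ℝ≥0∞) ^ 2 * ν ^ 2 := by
          simp [Finset.sum_const, mul_add, mul_comm, pow_two]
          ring
  -- centered second moment
  have hcenter : ∫⁻ x, (S x - n * ν) ^ 2 ∂(Measure.pi fun _ : Fin n => P) ≤ n * q := by
    have hpt : ∀ x, (S x - n * ν) ^ 2 + (2 * (n * ν)) * S x
        ≤ (S x) ^ 2 + (n * ν) ^ 2 := by
      intro x
      have := sq_tsub_add (S x) (n * ν)
        (lt_of_le_of_lt (hStop x) (ENNReal.mul_lt_top htn.lt_top hct.lt_top)).ne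
        (ENNReal.mul_ne_top htn hνt)
      calc (S x - n * ν) ^ 2 + (2 * (n * ν)) * S x
          = (S x - n * ν) ^ 2 + 2 * S x * (n * ν) := by ring
        _ ≤ (S x) ^ 2 + (n * ν) ^ 2 := this
    have hmes1 : Measurable fun x => (S x - (n : ℝ≥0∞) * ν) ^ 2 :=
      (hS.sub measurable_const).pow_const 2
    have hint : ∫⁻ x, ((S x - n * ν) ^ 2 + (2 * (n * ν)) * S x)
          ∂(Measure.pi fun _ : Fin n => P)
        ≤ ∫⁻ x, ((S x) ^ 2 + (n * ν) ^ 2) ∂(Measure.pi fun _ : Fin n => P) :=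
      lintegral_mono hpt
    rw [lintegral_add_left hmes1, lintegral_const_mul _ hS, hES,
      lintegral_add_left (hS.pow_const 2), lintegral_const] at hint
    simp only [measure_univ, mul_one] at hint
    have h2 : (2 : ℝ≥0∞) * (n * ν) * (n * ν) = 2 * ((n : ℝ≥0∞) ^ 2 * ν ^ 2) := by ring
    have h3 : ((n : ℝ≥0∞) * ν) ^ 2 = (n : ℝ≥0∞) ^ 2 * ν ^ 2 := by ring
    rw [h2, h3] at hint
    have hfin : (2 : ℝ≥0∞) * ((n : ℝ≥0∞) ^ 2 * ν ^ 2) ≠ ⊤ := by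
      refine ENNReal.mul_ne_top (by simp) (ENNReal.mul_ne_top ?_ ?_)
      · exact ENNReal.pow_ne_top htn
      · exact ENNReal.pow_ne_top hνt
    have hint2 : ∫⁻ x, (S x - n * ν) ^ 2 ∂(Measure.pi fun _ : Fin n => P)
          + 2 * ((n : ℝ≥0∞) ^ 2 * ν ^ 2)
        ≤ n * q + (n : ℝ≥0∞) ^ 2 * ν ^ 2 + (n : ℝ≥0∞) ^ 2 * ν ^ 2 := by
      refine le_trans hint ?_
      exact add_le_add_left hES2 _
    have : n * q + (n : ℝ≥0∞) ^ 2 * ν ^ 2 + (n : ℝ≥0∞) ^ 2 * ν ^ 2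
        = n * q + 2 * ((n : ℝ≥0∞) ^ 2 * ν ^ 2) := by ring
    rw [this] at hint2
    exact (ENNReal.add_le_add_iff_right hfin).mp hint2
  -- event inclusion
  have hsub : {x : Fin n → E | ∑ i, g (x i) ≤ n * b}
      ⊆ {x | (n : ℝ≥0∞) ^ 2 ≤ (S x - n * ν) ^ 2} := by
    intro x hx
    simp only [Set.mem_setOf_eq] at hx ⊢
    have hSg : S x + ∑ i, g (x i) = n * c := by
      rw [hS_def, ← Finset.sum_add_distrib]
      have : ∀ i, h (x i) + g (x i) = c := fun i => by
        rw [hh_def]; exact tsub_add_cancel_of_le (hgc _)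
      simp_rw [this]
      simp [mul_comm]
    have hstep : (n : ℝ≥0∞) * ν + n + ∑ i, g (x i) ≤ S x + ∑ i, g (x i) := by
      rw [hSg]
      calc (n : ℝ≥0∞) * ν + n + ∑ i, g (x i) ≤ n * ν + n + n * b := by
            gcongr
        _ = n * (ν + 1 + b) := by ring
        _ ≤ n * c := by
            refine mul_le_mul_right ?_ _
            have h1b : 1 + b ≤ μb := by rwa [add_comm] at hb
            calc ν + 1 + b = ν + (1 + b) := by ring
              _ ≤ ν + μb := by gcongr
              _ = (c - μb) + μb := by rw [hνeq]
              _ = c := tsub_add_cancel_of_le hμbc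
    have hSgt : ∑ i, g (x i) ≠ ⊤ := by
      refine (lt_of_le_of_lt hx ?_).ne
      exact ENNReal.mul_lt_top htn.lt_top hbt.lt_top
    have hkey : (n : ℝ≥0∞) * ν + n ≤ S x :=
      (ENNReal.add_le_add_iff_right hSgt).mp hstep
    have : (n : ℝ≥0∞) ≤ S x - n * ν :=
      ENNReal.le_sub_of_add_le_left (ENNReal.mul_ne_top htn hνt) hkey
    calc (n : ℝ≥0∞) ^ 2 = n * n := by ring
      _ ≤ (S x - n * ν) * (S x - n * ν) := mul_le_mul' this this
      _ = (S x - n * ν) ^ 2 := by ring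
  -- Markov
  have hmarkov : (n : ℝ≥0∞) ^ 2 * (Measure.pi fun _ : Fin n => P)
        {x | (n : ℝ≥0∞) ^ 2 ≤ (S x - n * ν) ^ 2}
      ≤ n * q :=
    le_trans (mul_meas_ge_le_lintegral₀ ((hS.sub measurable_const).pow_const 2).aemeasurable
      ((n : ℝ≥0∞) ^ 2)) hcenter
  have hA : (Measure.pi fun _ : Fin n => P) {x | ∑ i, g (x i) ≤ n * b}
      ≤ (Measure.pi fun _ : Fin n => P) {x | (n : ℝ≥0∞) ^ 2 ≤ (S x - n * ν) ^ 2} :=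
    measure_mono hsub
  set X := (Measure.pi fun _ : Fin n => P) {x | (n : ℝ≥0∞) ^ 2 ≤ (S x - n * ν) ^ 2} with hX
  have hn2t : ((n : ℝ≥0∞) ^ 2) ≠ ⊤ := ENNReal.pow_ne_top htn
  have hn20 : ((n : ℝ≥0∞) ^ 2) ≠ 0 := pow_ne_zero 2 htn0
  have hXle : X ≤ c ^ 2 * (n : ℝ≥0∞)⁻¹ := by
    have h1 : X = ((n : ℝ≥0∞) ^ 2)⁻¹ * ((n : ℝ≥0∞) ^ 2 * X) := by
      rw [← mul_assoc, ENNReal.inv_mul_cancel hn20 hn2t, one_mul]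
    rw [h1]
    calc ((n : ℝ≥0∞) ^ 2)⁻¹ * ((n : ℝ≥0∞) ^ 2 * X)
        ≤ ((n : ℝ≥0∞) ^ 2)⁻¹ * (n * q) := mul_le_mul_right hmarkov _
      _ ≤ ((n : ℝ≥0∞) ^ 2)⁻¹ * (n * c ^ 2) := mul_le_mul_right (mul_le_mul_right hq _) _
      _ = c ^ 2 * (n : ℝ≥0∞)⁻¹ := by
          rw [pow_two, ENNReal.mul_inv (Or.inl htn0) (Or.inl htn)]
          rw [mul_assoc, ← mul_assoc ((n : ℝ≥0∞))⁻¹ ((n : ℝ≥0∞)) (c ^ 2),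
            ENNReal.inv_mul_cancel htn0 htn, one_mul, mul_comm]
  exact le_trans hA hXle

lemma norm_rpow_le {d : ℕ} (p : ℝ) (hp : 1 ≤ p) (z : Euc d × Euc d) :
    ENNReal.ofReal (‖z.1‖ ^ p)
      ≤ ENNReal.ofReal (2 ^ p) *
        (ENNReal.ofReal (‖z.1 - z.2‖ ^ p) + ENNReal.ofReal (‖z.2‖ ^ p)) := by
  have hp0 : (0 : ℝ) ≤ p := le_trans zero_le_one hp
  set a := ‖z.1 - z.2‖ with ha
  set b := ‖z.2‖ with hb
  have ha0 : 0 ≤ a := norm_nonneg _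
  have hb0 : 0 ≤ b := norm_nonneg _
  have h1 : ‖z.1‖ ≤ a + b := by
    calc ‖z.1‖ = ‖(z.1 - z.2) + z.2‖ := by rw [sub_add_cancel]
    _ ≤ a + b := norm_add_le _ _
  have h2 : ‖z.1‖ ^ p ≤ (a + b) ^ p :=
    Real.rpow_le_rpow (norm_nonneg _) h1 hp0
  have h3 : (a + b) ^ p ≤ (2 * max a b) ^ p := by
    refine Real.rpow_le_rpow (by positivity) ?_ hp0
    rcases le_total a b with h | h
    · calc a + b ≤ b + b := by linarith
      _ = 2 * b := by ring
      _ ≤ 2 * max a b := by rw [max_eq_right h]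
    · calc a + b ≤ a + a := by linarith
      _ = 2 * a := by ring
      _ ≤ 2 * max a b := by rw [max_eq_left h]
  have h4 : (2 * max a b) ^ p = 2 ^ p * (max a b) ^ p :=
    Real.mul_rpow (by norm_num) (le_max_of_le_left ha0)
  have h5 : (max a b) ^ p ≤ a ^ p + b ^ p := by
    rcases max_cases a b with ⟨hm, _⟩ | ⟨hm, _⟩
    · rw [hm]; exact le_add_of_nonneg_right (Real.rpow_nonneg hb0 p)
    · rw [hm]; exact le_add_of_nonneg_left (Real.rpow_nonneg ha0 p)
  have h6 : ‖z.1‖ ^ p ≤ 2 ^ p * (a ^ p + b ^ p) := by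
    calc ‖z.1‖ ^ p ≤ (2 * max a b) ^ p := le_trans h2 h3
    _ = 2 ^ p * (max a b) ^ p := h4
    _ ≤ 2 ^ p * (a ^ p + b ^ p) := by
        refine mul_le_mul_of_nonneg_left h5 (by positivity)
  calc ENNReal.ofReal (‖z.1‖ ^ p) ≤ ENNReal.ofReal (2 ^ p * (a ^ p + b ^ p)) :=
        ENNReal.ofReal_le_ofReal h6
    _ = ENNReal.ofReal (2 ^ p) *
        (ENNReal.ofReal (a ^ p) + ENNReal.ofReal (b ^ p)) := by
        rw [ENNReal.ofReal_mul (by positivity),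
          ENNReal.ofReal_add (Real.rpow_nonneg ha0 p) (Real.rpow_nonneg hb0 p)]

/-- The deterministic lower bound: if the `p`-th moment of `Q` is at least
`2^p (M + 1 + m₀)`, then `W_p^p(Q, P₀) ≥ M + 1`. -/
lemma wpPow_lower {d : ℕ} (p M : ℝ) (hp : 1 ≤ p) (P₀ : Measure (Euc d))
    (hmom₀ : ∫⁻ x, ENNReal.ofReal (‖x‖ ^ p) ∂P₀ ≠ ∞)
    (Q : Measure (Euc d))
    (hQ : ENNReal.ofReal (2 ^ p) *
        (ENNReal.ofReal (M + 1) + ∫⁻ y, ENNReal.ofReal (‖y‖ ^ p) ∂P₀)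
      ≤ ∫⁻ x, ENNReal.ofReal (‖x‖ ^ p) ∂Q) :
    ENNReal.ofReal (M + 1) ≤ WpPow p Q P₀ := by
  have hp0 : (0 : ℝ) ≤ p := le_trans zero_le_one hp
  have hmes : Measurable fun x : Euc d => ENNReal.ofReal (‖x‖ ^ p) :=
    (measurable_norm.pow_const p).ennreal_ofReal
  rw [WpPow]
  refine le_iInf₂ fun γ hγ => ?_
  obtain ⟨hprob, hfst, hsnd⟩ := hγ
  set C := ENNReal.ofReal (2 ^ p) with hC
  have hC0 : C ≠ 0 := by
    simp [hC, ENNReal.ofReal_eq_zero, not_le]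
    positivity
  have hCt : C ≠ ⊤ := ENNReal.ofReal_ne_top
  set m₀ := ∫⁻ y, ENNReal.ofReal (‖y‖ ^ p) ∂P₀ with hm₀
  have h1 : ∫⁻ x, ENNReal.ofReal (‖x‖ ^ p) ∂Q
      = ∫⁻ z : Euc d × Euc d, ENNReal.ofReal (‖z.1‖ ^ p) ∂γ := by
    rw [← hfst, lintegral_map hmes measurable_fst]
  have h2 : m₀ = ∫⁻ z : Euc d × Euc d, ENNReal.ofReal (‖z.2‖ ^ p) ∂γ := by
    rw [hm₀, ← hsnd, lintegral_map hmes measurable_snd]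
  have hmesd : Measurable fun z : Euc d × Euc d => ENNReal.ofReal (‖z.1 - z.2‖ ^ p) :=
    (((measurable_fst.sub measurable_snd).norm).pow_const p).ennreal_ofReal
  have hmes2 : Measurable fun z : Euc d × Euc d => ENNReal.ofReal (‖z.2‖ ^ p) :=
    hmes.comp measurable_snd
  have hbound : ∫⁻ x, ENNReal.ofReal (‖x‖ ^ p) ∂Q
      ≤ C * ((∫⁻ z, ENNReal.ofReal (‖z.1 - z.2‖ ^ p) ∂γ) + m₀) := by
    rw [h1, h2]
    calc ∫⁻ z : Euc d × Euc d, ENNReal.ofReal (‖z.1‖ ^ p) ∂γ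
        ≤ ∫⁻ z : Euc d × Euc d, C * (ENNReal.ofReal (‖z.1 - z.2‖ ^ p)
            + ENNReal.ofReal (‖z.2‖ ^ p)) ∂γ :=
          lintegral_mono fun z => norm_rpow_le p hp z
      _ = C * ((∫⁻ z, ENNReal.ofReal (‖z.1 - z.2‖ ^ p) ∂γ)
            + ∫⁻ z : Euc d × Euc d, ENNReal.ofReal (‖z.2‖ ^ p) ∂γ) := by
          rw [lintegral_const_mul' _ _ hCt, lintegral_add_left hmesd]
  have hchain : C * (ENNReal.ofReal (M + 1) + m₀)
      ≤ C * ((∫⁻ z, ENNReal.ofReal (‖z.1 - z.2‖ ^ p) ∂γ) + m₀) :=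
    le_trans hQ hbound
  have h3 : ENNReal.ofReal (M + 1) + m₀
      ≤ (∫⁻ z, ENNReal.ofReal (‖z.1 - z.2‖ ^ p) ∂γ) + m₀ :=
    (ENNReal.mul_le_mul_iff_right hC0 hCt).mp hchain
  exact (ENNReal.add_le_add_iff_right hmom₀).mp h3

lemma lintegral_empDist {n : ℕ} (x : Fin n → E) {f : E → ℝ≥0∞} (hf : Measurable f) :
    ∫⁻ y, f y ∂(empDist x) = (n : ℝ≥0∞)⁻¹ * ∑ i, f (x i) := by
  rw [empDist, lintegral_smul_measure, lintegral_finset_sum_measure]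
  simp_rw [lintegral_dirac' _ hf, smul_eq_mul]

lemma iSup_min_natCast (a : ℝ≥0∞) : ⨆ m : ℕ, min a (m : ℝ≥0∞) = a := by
  refine le_antisymm (iSup_le fun m => min_le_left _ _) ?_
  rcases eq_or_ne a ⊤ with rfl | ha
  · calc (⊤ : ℝ≥0∞) = ⨆ m : ℕ, (m : ℝ≥0∞) := ENNReal.iSup_natCast.symm
    _ ≤ ⨆ m : ℕ, min ⊤ (m : ℝ≥0∞) := by simp
  · obtain ⟨m, hm⟩ := ENNReal.exists_nat_gt ha
    calc a = min a (m : ℝ≥0∞) := (min_eq_left hm.le).symm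
    _ ≤ ⨆ m : ℕ, min a (m : ℝ≥0∞) := le_iSup (fun m : ℕ => min a (m : ℝ≥0∞)) m

end Aux

/-- If `P₀` has finite `p`-th moment but `P` has infinite `p`-th moment, then
`T_n = W_p^p(P̂_n, P₀) → ∞` in `Pⁿ`-probability: for every `M > 0`, `Pⁿ[T_n > M] → 1`. -/
theorem empirical_Wasserstein_statistic_tendsto_infty {d : ℕ} (p : ℝ) (hp : 1 ≤ p)
    (P₀ P : Measure (Euc d)) [IsProbabilityMeasure P₀] [IsProbabilityMeasure P]
    (hmom₀ : HasFinMom p P₀)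
    (hmom : ∫⁻ x, ENNReal.ofReal (‖x‖ ^ p) ∂P = ∞)
    (M : ℝ) (hM : 0 < M) :
    Tendsto (fun n : ℕ =>
        prodn P n {x | ENNReal.ofReal M < WpPow p (empDist x) P₀})
      atTop (𝓝 1) := by
  have hp0 : (0 : ℝ) ≤ p := le_trans zero_le_one hp
  have hprobn : ∀ n, IsProbabilityMeasure (prodn P n) := fun n => by
    rw [prodn]; infer_instance
  have hf0 : Measurable fun x : Euc d => ENNReal.ofReal (‖x‖ ^ p) :=
    (measurable_norm.pow_const p).ennreal_ofReal
  set m₀ := ∫⁻ y, ENNReal.ofReal (‖y‖ ^ p) ∂P₀ with hm₀def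
  have hm₀ : m₀ ≠ ⊤ := hmom₀
  set C := ENNReal.ofReal (2 ^ p) with hCdef
  set K : ℝ≥0∞ := C * (ENNReal.ofReal (M + 1) + m₀) with hKdef
  have hKt : K ≠ ⊤ :=
    ENNReal.mul_ne_top ENNReal.ofReal_ne_top
      (ENNReal.add_ne_top.mpr ⟨ENNReal.ofReal_ne_top, hm₀⟩)
  set b : ℝ≥0∞ := K + 1 with hbdef
  have hbt : b ≠ ⊤ := ENNReal.add_ne_top.mpr ⟨hKt, ENNReal.one_ne_top⟩
  -- choose a truncation level
  have htrunc : ∃ m : ℕ, b + 1 ≤ ∫⁻ y, min (ENNReal.ofReal (‖y‖ ^ p)) (m : ℝ≥0∞) ∂P := by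
    have hmono : Monotone fun (m : ℕ) (y : Euc d) =>
        min (ENNReal.ofReal (‖y‖ ^ p)) (m : ℝ≥0∞) := by
      intro m m' hmm y
      exact min_le_min le_rfl (Nat.cast_le.mpr hmm)
    have hsup : ⨆ m : ℕ, ∫⁻ y, min (ENNReal.ofReal (‖y‖ ^ p)) (m : ℝ≥0∞) ∂P = ⊤ := by
      rw [← lintegral_iSup (fun m => hf0.min measurable_const) hmono]
      have : ∀ y : Euc d, ⨆ m : ℕ, min (ENNReal.ofReal (‖y‖ ^ p)) (m : ℝ≥0∞)
          = ENNReal.ofReal (‖y‖ ^ p) := fun y => iSup_min_natCast _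
      simp_rw [this]
      exact hmom
    have hlt : b + 1 < ⨆ m : ℕ, ∫⁻ y, min (ENNReal.ofReal (‖y‖ ^ p)) (m : ℝ≥0∞) ∂P := by
      rw [hsup]
      exact (ENNReal.add_ne_top.mpr ⟨hbt, ENNReal.one_ne_top⟩).lt_top
    obtain ⟨m, hm⟩ := lt_iSup_iff.mp hlt
    exact ⟨m, hm.le⟩
  obtain ⟨m, hm⟩ := htrunc
  set g : Euc d → ℝ≥0∞ := fun y => min (ENNReal.ofReal (‖y‖ ^ p)) (m : ℝ≥0∞) with hgdef
  have hg : Measurable g := hf0.min measurable_const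
  have hgc : ∀ y, g y ≤ (m : ℝ≥0∞) := fun y => min_le_right _ _
  -- the bad events
  set A : ∀ n : ℕ, Set (Fin n → Euc d) :=
    fun n => {x | ∑ i, g (x i) ≤ n * b} with hAdef
  have hAmeas : ∀ n, MeasurableSet (A n) := fun n =>
    measurableSet_le (Finset.measurable_sum _ fun i _ => hg.comp (measurable_pi_apply i))
      measurable_const
  have hAbound : ∀ n, prodn P n (A n) ≤ (m : ℝ≥0∞) ^ 2 * (n : ℝ≥0∞)⁻¹ := fun n => by
    rw [prodn]
    exact weak_lln P hg (natCast_ne_top m) hgc hm n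
  -- complement of the bad event is contained in the target event
  have hsub : ∀ n, (A n)ᶜ ⊆ {x : Fin n → Euc d | ENNReal.ofReal M < WpPow p (empDist x) P₀} := by
    intro n x hx
    simp only [hAdef, Set.mem_compl_iff, Set.mem_setOf_eq, not_le] at hx
    have hn : n ≠ 0 := by
      rintro rfl
      simp at hx
    have htn0 : (n : ℝ≥0∞) ≠ 0 := Nat.cast_ne_zero.mpr hn
    have htn : (n : ℝ≥0∞) ≠ ⊤ := natCast_ne_top n
    have hemp : K ≤ ∫⁻ y, ENNReal.ofReal (‖y‖ ^ p) ∂(empDist x) := by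
      rw [lintegral_empDist x hf0]
      have h1 : (n : ℝ≥0∞) * b ≤ ∑ i, g (x i) := hx.le
      have h2 : ∑ i, g (x i) ≤ ∑ i, ENNReal.ofReal (‖x i‖ ^ p) :=
        Finset.sum_le_sum fun i _ => min_le_left _ _
      calc K ≤ b := le_self_add
        _ = (n : ℝ≥0∞)⁻¹ * ((n : ℝ≥0∞) * b) := by
            rw [← mul_assoc, ENNReal.inv_mul_cancel htn0 htn, one_mul]
        _ ≤ (n : ℝ≥0∞)⁻¹ * ∑ i, ENNReal.ofReal (‖x i‖ ^ p) :=
            mul_le_mul_right (le_trans h1 h2) _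
    have hlow : ENNReal.ofReal (M + 1) ≤ WpPow p (empDist x) P₀ :=
      wpPow_lower p M hp P₀ hm₀ (empDist x) (le_trans (le_of_eq rfl) hemp)
    refine lt_of_lt_of_le ?_ hlow
    exact ENNReal.ofReal_lt_ofReal_iff (by linarith) |>.mpr (by linarith)
  -- conclusion via squeeze
  set T : ∀ n : ℕ, Set (Fin n → Euc d) :=
    fun n => {x | ENNReal.ofReal M < WpPow p (empDist x) P₀} with hTdef
  have hlower : ∀ n : ℕ, 1 - (m : ℝ≥0∞) ^ 2 * (n : ℝ≥0∞)⁻¹ ≤ prodn P n (T n) := by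
    intro n
    haveI := hprobn n
    calc 1 - (m : ℝ≥0∞) ^ 2 * (n : ℝ≥0∞)⁻¹
        ≤ 1 - prodn P n (A n) := tsub_le_tsub_left (hAbound n) 1
      _ = prodn P n (A n)ᶜ := (prob_compl_eq_one_sub (hAmeas n)).symm
      _ ≤ prodn P n (T n) := measure_mono (hsub n)
  have hupper : ∀ n, prodn P n (T n) ≤ 1 := fun n => by
    haveI := hprobn n
    exact prob_le_one
  have hzero : Tendsto (fun n : ℕ => (m : ℝ≥0∞) ^ 2 * (n : ℝ≥0∞)⁻¹) atTop (𝓝 0) := by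
    have := ENNReal.Tendsto.const_mul (a := (m : ℝ≥0∞) ^ 2)
      ENNReal.tendsto_inv_nat_nhds_zero (Or.inr (ENNReal.pow_ne_top (natCast_ne_top m)))
    simpa using this
  have hone : Tendsto (fun n : ℕ => 1 - (m : ℝ≥0∞) ^ 2 * (n : ℝ≥0∞)⁻¹) atTop (𝓝 1) := by
    have hcont : Continuous fun z : ℝ≥0∞ => 1 - z :=
      ENNReal.continuous_sub_left ENNReal.one_ne_top
    have := (hcont.tendsto 0).comp hzero
    simpa [Function.comp_def] using this
  exact tendsto_of_tendsto_of_tendsto_of_le_of_le hone tendsto_const_nhds hlower hupper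
end
end

section
/- (Orthogonality of the quantile-process influence function and the score.) Let Θ ⊆ ℝ^k be open, θ ∈ Θ, and let X be a real random variable with distribution P_θ having continuous strictly positive density f_θ, cumulative distribution function F_θ, and quantile function F_θ^{-1}. Let ℓ̇_θ : ℝ → ℝ^k (the score) and ψ_θ : ℝ → ℝ^k (the influence function) be P_θ-square-integrable and satisfy: (i) E_θ[ℓ̇_θ(X)] = 0; (ii) E_θ[ψ_θ(X) ℓ̇_θ(X)ᵀ] = I_k (the k×k identity matrix); (iii) for a fixed u ∈ (0,1), the vector v := ∇_θ F_θ^{-1}(u) satisfies v = −(1/f_θ(F_θ^{-1}(u))) E_θ[ℓ̇_θ(X) 1{X ≤ F_θ^{-1}(u)}]. Define g_θ(x, u) = (1{x ≤ F_θ^{-1}(u)} − u)/f_θ(F_θ^{-1}(u)) + ψ_θ(x)ᵀ v. Then E_θ[ ℓ̇_θ(X) · g_θ(X, u) ] = 0 ∈ ℝ^k. -/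
open MeasureTheory Filter Topology

noncomputable section

/-- Orthogonality of the quantile-process influence function and the score.
If the score `ℓ̇_θ` is centered (i), the influence function `ψ_θ` satisfies the regularity
condition `E_θ[ψ_θ(X) ℓ̇_θ(X)ᵀ] = I_k` (ii), and `v = ∇_θ F_θ⁻¹(u)` satisfies the gradient
identity (iii), then `E_θ[ℓ̇_θ(X) · g_θ(X, u)] = 0`, where
`g_θ(x,u) = (1{x ≤ F_θ⁻¹(u)} - u)/f_θ(F_θ⁻¹(u)) + ψ_θ(x)ᵀ v`. -/
theorem score_orthogonal_to_quantile_influence {k : ℕ}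
    (P : Measure ℝ) [IsProbabilityMeasure P]
    (f : ℝ → ℝ) (hfc : Continuous f) (hfpos : ∀ x : ℝ, 0 < f x)
    -- `P` has density `f` with respect to Lebesgue measure
    (hdens : P = volume.withDensity fun x => ENNReal.ofReal (f x))
    -- square-integrable score and influence function
    (l ψ : ℝ → EuclideanSpace ℝ (Fin k))
    (hl2 : MemLp l 2 P) (hψ2 : MemLp ψ 2 P)
    -- `q = F⁻¹(u)` is the `u`-quantile
    (u : ℝ) (hu : u ∈ Set.Ioo (0 : ℝ) 1) (q : ℝ)
    (hq : P (Set.Iic q) = ENNReal.ofReal u)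
    -- (i) the score is centered
    (hl0 : (∫ x, l x ∂P) = 0)
    -- (ii) `E[ψ(X) l(X)ᵀ] = I_k`
    (horth : ∀ i j : Fin k, ∫ x, ψ x i * l x j ∂P = if i = j then (1 : ℝ) else 0)
    -- (iii) gradient identity for the quantile: `v = -(1/f(q)) E[l(X) 1{X ≤ q}]`
    (v : EuclideanSpace ℝ (Fin k))
    (hv : v = -(f q)⁻¹ • ∫ x, ((Set.Iic q).indicator (fun _ => (1 : ℝ)) x) • l x ∂P) :
    ∫ x, (((Set.Iic q).indicator (fun _ => (1 : ℝ)) x - u) / f q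
        + (inner ℝ (ψ x) v : ℝ)) • l x ∂P = 0 := by
  set ind : ℝ → ℝ := (Set.Iic q).indicator (fun _ => (1 : ℝ)) with hind
  have hl1 : Integrable l P := hl2.integrable one_le_two
  -- integrability of indicator • l
  have hiInd : Integrable (fun x => ind x • l x) P := by
    have : (fun x => ind x • l x) = (Set.Iic q).indicator l := by
      funext x
      by_cases hx : x ∈ Set.Iic q
      · simp [hind, Set.indicator_of_mem hx]
      · simp [hind, Set.indicator_of_notMem hx]
    rw [this]
    exact hl1.indicator measurableSet_Iic
  -- the scalar function φ x = ⟪ψ x, v⟫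
  set φ : ℝ → ℝ := fun x => (inner ℝ (ψ x) v : ℝ) with hφdef
  have hφ2 : MemLp φ 2 P := by
    have : φ = (innerSL ℝ v) ∘ ψ := by
      funext x; simp only [hφdef, Function.comp_apply, innerSL_apply_apply, real_inner_comm]
    rw [this]
    exact (innerSL ℝ v).comp_memLp' hψ2
  have hiφ : Integrable (fun x => φ x • l x) P := by
    have := hl2.smul (φ := φ) hφ2 (r := 1) (hpqr := ⟨by simp [ENNReal.inv_two_add_inv_two]⟩)
    exact memLp_one_iff_integrable.mp this
  -- componentwise integrability of ψ i * l j
  have hcomp : ∀ i j : Fin k, Integrable (fun x => ψ x i * l x j) P := by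
    intro i j
    have hψi : MemLp (fun x => ψ x i) 2 P :=
      (EuclideanSpace.proj i : EuclideanSpace ℝ (Fin k) →L[ℝ] ℝ).comp_memLp' hψ2
    have hlj : MemLp (fun x => l x j) 2 P :=
      (EuclideanSpace.proj j : EuclideanSpace ℝ (Fin k) →L[ℝ] ℝ).comp_memLp' hl2
    have := hlj.smul (φ := fun x => ψ x i) hψi
      (r := 1) (hpqr := ⟨by simp [ENNReal.inv_two_add_inv_two]⟩)
    exact memLp_one_iff_integrable.mp this
  -- decompose the integrand
  have hdecomp : (fun x => (((ind x - u) / f q) + (inner ℝ (ψ x) v : ℝ)) • l x)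
      = fun x => (f q)⁻¹ • (ind x • l x)
        + ((-(u * (f q)⁻¹)) • l x + φ x • l x) := by
    funext x
    have : (ind x - u) / f q + (inner ℝ (ψ x) v : ℝ)
        = (f q)⁻¹ * ind x + (-(u * (f q)⁻¹) + (inner ℝ (ψ x) v : ℝ)) := by ring
    rw [this, add_smul, add_smul, smul_smul]
  -- T3 = v
  have hT3 : (∫ x, φ x • l x ∂P) = v := by
    refine PiLp.ext fun j => ?_
    have h1 : (∫ x, φ x • l x ∂P) j
        = ∫ x, (φ x • l x : EuclideanSpace ℝ (Fin k)) j ∂P := by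
      exact ((EuclideanSpace.proj j).integral_comp_comm hiφ).symm
    rw [h1]
    have h2 : ∀ x, (φ x • l x : EuclideanSpace ℝ (Fin k)) j
        = ∑ i, v i * (ψ x i * l x j) := by
      intro x
      have : φ x = ∑ i, ψ x i * v i := by
        simp [hφdef, PiLp.inner_apply, RCLike.inner_apply, starRingEnd_apply]
        exact Finset.sum_congr rfl fun i _ => mul_comm _ _
      simp only [PiLp.smul_apply, smul_eq_mul, this, Finset.sum_mul]
      exact Finset.sum_congr rfl fun i _ => by ring
    simp_rw [h2]
    rw [integral_finset_sum]
    · have : ∀ i ∈ Finset.univ, (∫ x, v i * (ψ x i * l x j) ∂P)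
          = v i * (if i = j then (1:ℝ) else 0) := by
        intro i _
        rw [integral_const_mul, horth i j]
      rw [Finset.sum_congr rfl this]
      simp
    · intro i _
      exact (hcomp i j).const_mul _
  -- T1 = -v
  have hT1 : (f q)⁻¹ • (∫ x, ind x • l x ∂P) = -v := by
    rw [hv, neg_smul, neg_neg]
  have e1 : Integrable (fun x => (f q)⁻¹ • (ind x • l x)) P := hiInd.smul ((f q)⁻¹)
  have e2 : Integrable (fun x => (-(u * (f q)⁻¹)) • l x) P := hl1.smul (-(u * (f q)⁻¹))
  have e23 : Integrable (fun x => (-(u * (f q)⁻¹)) • l x + φ x • l x) P := e2.add hiφ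
  rw [hdecomp, integral_add e1 e23, integral_add e2 hiφ,
    integral_smul, integral_smul, hl0, hT1, hT3]
  simp
end
end
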